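/- arXiv:2010.02857 — 2 statements merged into one kernel-verified Lean document; each statement's English description precedes it below -/
import Mathlib

section
/- Let H > 0, κ ≥ 0, h = √3·H/2, and let x' ∈ ℝ³ with |x'| ≤ h. Consider the change of variables x(s, θ, φ) = (h/s)·(sin θ cos φ, sin θ sin φ, cos θ) and set G(s, θ, φ) = g_S(x(s, θ, φ), x') for s > 0, where g_S(x, x') = (|x|/|x − x'|)·e^{iκ(|x − x'| − |x|)}. Then for each fixed (θ₀, φ₀) there exist ε > 0 and a function F, (real-)analytic on (−ε, ε) × (θ₀ − ε, θ₀ + ε) × (φ₀ − ε, φ₀ + ε), such that F(s, θ, φ) = G(s, θ, φ) whenever 0 < s < ε; i.e., g_S admits an analytic extension in the variables (s, θ, φ) up to and including s = 0 (corresponding to r = |x| = ∞). -/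
set_option autoImplicit false

noncomputable section

lemma analyticAt_csin (z : ℂ) : AnalyticAt ℂ Complex.sin z := by
  have h : AnalyticAt ℂ (fun w : ℂ =>
      (Complex.exp (-w * Complex.I) - Complex.exp (w * Complex.I)) * Complex.I / 2) z := by
    apply AnalyticAt.div _ analyticAt_const (by norm_num)
    exact ((((analyticAt_id.neg).mul analyticAt_const).cexp.sub
      ((analyticAt_id.mul analyticAt_const).cexp)).mul analyticAt_const)
  exact h.congr (Filter.Eventually.of_forall fun w => rfl)

lemma analyticAt_ccos (z : ℂ) : AnalyticAt ℂ Complex.cos z := by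
  have h : AnalyticAt ℂ (fun w : ℂ =>
      (Complex.exp (w * Complex.I) + Complex.exp (-w * Complex.I)) / 2) z := by
    apply AnalyticAt.div _ analyticAt_const (by norm_num)
    exact ((analyticAt_id.mul analyticAt_const).cexp.add
      (((analyticAt_id.neg).mul analyticAt_const).cexp))
  exact h.congr (Filter.Eventually.of_forall fun w => rfl)

lemma analyticAt_rsin (x : ℝ) : AnalyticAt ℝ Real.sin x := by
  have h2 : AnalyticAt ℝ (fun t : ℝ => (Complex.sin t).re) x :=
    (Complex.reCLM.analyticAt _).comp
      (((analyticAt_csin (x : ℂ)).restrictScalars).comp (Complex.ofRealCLM.analyticAt x))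
  exact h2.congr (Filter.Eventually.of_forall fun t => Complex.sin_ofReal_re t)

lemma analyticAt_rcos (x : ℝ) : AnalyticAt ℝ Real.cos x := by
  have h2 : AnalyticAt ℝ (fun t : ℝ => (Complex.cos t).re) x :=
    (Complex.reCLM.analyticAt _).comp
      (((analyticAt_ccos (x : ℂ)).restrictScalars).comp (Complex.ofRealCLM.analyticAt x))
  exact h2.congr (Filter.Eventually.of_forall fun t => Complex.cos_ofReal_re t)

lemma analyticAt_rlog {x : ℝ} (hx : 0 < x) : AnalyticAt ℝ Real.log x := by
  have h1 : AnalyticAt ℝ (fun t : ℝ => (Complex.log t).re) x :=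
    (Complex.reCLM.analyticAt _).comp
      (((analyticAt_clog (Complex.ofReal_mem_slitPlane.mpr hx)).restrictScalars).comp
        (Complex.ofRealCLM.analyticAt x))
  exact h1.congr (Filter.Eventually.of_forall fun t => Complex.log_ofReal_re t)

lemma analyticAt_sqrt' {x : ℝ} (hx : 0 < x) : AnalyticAt ℝ Real.sqrt x := by
  have h1 : AnalyticAt ℝ (fun t : ℝ => Real.exp (Real.log t * (1/2))) x :=
    ((analyticAt_rlog hx).mul analyticAt_const).rexp
  apply h1.congr
  filter_upwards [Ioi_mem_nhds hx] with t ht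
  rw [Real.sqrt_eq_rpow, Real.rpow_def_of_pos ht]

/-- The spherical parametrization `x̃(r, θ, φ)` of `ℝ³`. -/
noncomputable def sph (r θ φ : ℝ) : EuclideanSpace ℝ (Fin 3) :=
  WithLp.toLp 2 ![r * Real.sin θ * Real.cos φ, r * Real.sin θ * Real.sin φ, r * Real.cos θ]

/-- The analytic factor `g_S(x, x') = (‖x‖/‖x − x'‖) · exp(iκ(‖x − x'‖ − ‖x‖))`. -/
noncomputable def gS (κ : ℝ) (x x' : EuclideanSpace ℝ (Fin 3)) : ℂ :=
  (↑(‖x‖ / ‖x - x'‖) : ℂ) * Complex.exp (Complex.I * κ * (↑‖x - x'‖ - ↑‖x‖))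

/-- with `h = √3·H/2`, `‖x'‖ ≤ h`, and the change of variables
`x(s, θ, φ) = x̃(h/s, θ, φ)`, the function `G(s, θ, φ) = g_S(x(s,θ,φ), x')` admits,
around any `(0, θ₀, φ₀)`, a real-analytic extension `F` up to and including `s = 0`:
`F` is analytic on `(−ε, ε) × (θ₀−ε, θ₀+ε) × (φ₀−ε, φ₀+ε)` and agrees with `G`
there whenever `0 < s < ε`. -/
theorem gS_extends_analytically_to_s_eq_zero (H κ : ℝ) (hH : 0 < H) (hκ : 0 ≤ κ)
    (x' : EuclideanSpace ℝ (Fin 3)) (hx' : ‖x'‖ ≤ Real.sqrt 3 * H / 2)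
    (θ₀ φ₀ : ℝ) :
    ∃ ε > 0, ∃ F : ℝ × ℝ × ℝ → ℂ,
      AnalyticOnNhd ℝ F
        (Set.Ioo (-ε) ε ×ˢ Set.Ioo (θ₀ - ε) (θ₀ + ε) ×ˢ Set.Ioo (φ₀ - ε) (φ₀ + ε)) ∧
      ∀ s θ φ : ℝ, 0 < s → s < ε → θ ∈ Set.Ioo (θ₀ - ε) (θ₀ + ε) →
        φ ∈ Set.Ioo (φ₀ - ε) (φ₀ + ε) →
        F (s, θ, φ) = gS κ (sph (Real.sqrt 3 * H / 2 / s) θ φ) x' := by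
  have h3 : (0:ℝ) < Real.sqrt 3 := Real.sqrt_pos.mpr (by norm_num)
  set h : ℝ := Real.sqrt 3 * H / 2 with hh
  have hhpos : 0 < h := by positivity
  set n : ℝ := ‖x'‖ with hn
  have hn0 : 0 ≤ n := norm_nonneg _
  have hnormsq : n ^ 2 = x' 0 ^ 2 + x' 1 ^ 2 + x' 2 ^ 2 := by
    rw [hn, EuclideanSpace.norm_eq,
      Real.sq_sqrt (Finset.sum_nonneg fun i _ => sq_nonneg _)]
    simp [Fin.sum_univ_three, Real.norm_eq_abs, sq_abs]
  set P : ℝ × ℝ × ℝ → ℝ := fun q =>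
    Real.sin q.2.1 * Real.cos q.2.2 * x' 0 + Real.sin q.2.1 * Real.sin q.2.2 * x' 1
      + Real.cos q.2.1 * x' 2 with hPdef
  set Q : ℝ × ℝ × ℝ → ℝ := fun q =>
    1 - 2 * (q.1 / h) * P q + q.1 ^ 2 * n ^ 2 / h ^ 2 with hQdef
  have hPbound : ∀ q, |P q| ≤ n := by
    intro q
    have hs1 := Real.sin_sq_add_cos_sq q.2.1
    have hs2 := Real.sin_sq_add_cos_sq q.2.2
    have key : (P q) ^ 2 ≤ n ^ 2 := by
      rw [hnormsq]
      simp only [hPdef]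
      have hu : (Real.sin q.2.1 * Real.cos q.2.2) ^ 2 + (Real.sin q.2.1 * Real.sin q.2.2) ^ 2
          + Real.cos q.2.1 ^ 2 = 1 := by
        linear_combination Real.sin q.2.1 ^ 2 * hs2 + hs1
      have lagrange : (Real.sin q.2.1 * Real.cos q.2.2 * x' 0
            + Real.sin q.2.1 * Real.sin q.2.2 * x' 1 + Real.cos q.2.1 * x' 2) ^ 2
          + (Real.sin q.2.1 * Real.cos q.2.2 * x' 1 - Real.sin q.2.1 * Real.sin q.2.2 * x' 0) ^ 2
          + (Real.sin q.2.1 * Real.cos q.2.2 * x' 2 - Real.cos q.2.1 * x' 0) ^ 2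
          + (Real.sin q.2.1 * Real.sin q.2.2 * x' 2 - Real.cos q.2.1 * x' 1) ^ 2
          = ((Real.sin q.2.1 * Real.cos q.2.2) ^ 2 + (Real.sin q.2.1 * Real.sin q.2.2) ^ 2
            + Real.cos q.2.1 ^ 2) * (x' 0 ^ 2 + x' 1 ^ 2 + x' 2 ^ 2) := by ring
      rw [hu, one_mul] at lagrange
      nlinarith [sq_nonneg (Real.sin q.2.1 * Real.cos q.2.2 * x' 1
          - Real.sin q.2.1 * Real.sin q.2.2 * x' 0),
        sq_nonneg (Real.sin q.2.1 * Real.cos q.2.2 * x' 2 - Real.cos q.2.1 * x' 0),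
        sq_nonneg (Real.sin q.2.1 * Real.sin q.2.2 * x' 2 - Real.cos q.2.1 * x' 1)]
    calc |P q| = Real.sqrt ((P q) ^ 2) := (Real.sqrt_sq_eq_abs _).symm
    _ ≤ Real.sqrt (n ^ 2) := Real.sqrt_le_sqrt key
    _ = n := Real.sqrt_sq hn0
  have hQpos : ∀ q : ℝ × ℝ × ℝ, |q.1| ≤ 1/4 → (1:ℝ)/2 ≤ Q q := by
    intro q hq1
    have hp := hPbound q
    have habs : |2 * (q.1 / h) * P q| ≤ 1/2 := by
      rw [abs_mul, abs_mul, abs_div, abs_of_pos hhpos, abs_two]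
      have h1 : |q.1| * |P q| ≤ (1/4) * h :=
        mul_le_mul hq1 (hp.trans hx') (abs_nonneg _) (by norm_num)
      have h2 : 2 * (|q.1| / h) * |P q| = (2 * (|q.1| * |P q|)) / h := by ring
      rw [h2, div_le_iff₀ hhpos]
      linarith
    have h2 : 0 ≤ q.1 ^ 2 * n ^ 2 / h ^ 2 := by positivity
    have h4 := abs_le.mp habs
    simp only [hQdef]
    linarith [h4.1, h4.2]
  refine ⟨1/4, by norm_num, fun q =>
    (↑(Real.sqrt (Q q)) : ℂ)⁻¹ *
      Complex.exp (Complex.I * ↑κ *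
        Complex.ofReal ((q.1 * n ^ 2 / h - 2 * P q) / (Real.sqrt (Q q) + 1))), ?_, ?_⟩
  · -- analyticity
    intro q hq
    have hq1 : |q.1| ≤ 1/4 := by
      have := hq.1
      simp only [Set.mem_Ioo] at this
      exact (abs_lt.mpr ⟨by linarith [this.1], this.2⟩).le
    have hQq : (0:ℝ) < Q q := lt_of_lt_of_le (by norm_num) (hQpos q hq1)
    have hθ : AnalyticAt ℝ (fun q : ℝ × ℝ × ℝ => q.2.1) q :=
      analyticAt_fst.comp analyticAt_snd
    have hφ : AnalyticAt ℝ (fun q : ℝ × ℝ × ℝ => q.2.2) q :=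
      analyticAt_snd.comp analyticAt_snd
    have hsinθ : AnalyticAt ℝ (fun q : ℝ × ℝ × ℝ => Real.sin q.2.1) q :=
      (analyticAt_rsin _).comp hθ
    have hcosθ : AnalyticAt ℝ (fun q : ℝ × ℝ × ℝ => Real.cos q.2.1) q :=
      (analyticAt_rcos _).comp hθ
    have hsinφ : AnalyticAt ℝ (fun q : ℝ × ℝ × ℝ => Real.sin q.2.2) q :=
      (analyticAt_rsin _).comp hφ
    have hcosφ : AnalyticAt ℝ (fun q : ℝ × ℝ × ℝ => Real.cos q.2.2) q :=
      (analyticAt_rcos _).comp hφ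
    have hPa : AnalyticAt ℝ P q := by
      rw [hPdef]
      exact (((hsinθ.mul hcosφ).mul analyticAt_const).add
        ((hsinθ.mul hsinφ).mul analyticAt_const)).add (hcosθ.mul analyticAt_const)
    have hQa : AnalyticAt ℝ Q q := by
      rw [hQdef]
      exact (analyticAt_const.sub ((analyticAt_const.mul
          (analyticAt_fst.div analyticAt_const hhpos.ne')).mul hPa)).add
        (((analyticAt_fst.pow 2).mul analyticAt_const).div analyticAt_const
          (by positivity : (h:ℝ) ^ 2 ≠ 0))
    have hsq : AnalyticAt ℝ (fun q => Real.sqrt (Q q)) q := (analyticAt_sqrt' hQq).comp hQa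
    have hrpos : (0:ℝ) < Real.sqrt (Q q) := Real.sqrt_pos.mpr hQq
    have hA : AnalyticAt ℝ
        (fun q : ℝ × ℝ × ℝ => (q.1 * n ^ 2 / h - 2 * P q) / (Real.sqrt (Q q) + 1)) q := by
      apply AnalyticAt.div
      · exact ((analyticAt_fst.mul analyticAt_const).div analyticAt_const hhpos.ne').sub
          (analyticAt_const.mul hPa)
      · exact hsq.add analyticAt_const
      · have : (0:ℝ) < Real.sqrt (Q q) + 1 := by linarith
        exact this.ne'
    apply AnalyticAt.mul
    · apply AnalyticAt.inv ((Complex.ofRealCLM.analyticAt _).comp hsq)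
      simpa using hrpos.ne'
    · exact ((analyticAt_cexp.restrictScalars).comp
        (analyticAt_const.mul ((Complex.ofRealCLM.analyticAt _).comp hA : AnalyticAt ℝ (fun q : ℝ × ℝ × ℝ => Complex.ofReal ((q.1 * n ^ 2 / h - 2 * P q) / (Real.sqrt (Q q) + 1))) q)))
  · -- equality
    intro s θ φ hs hsε hθm hφm
    set r : ℝ := h / s with hr
    have hrpos : 0 < r := div_pos hhpos hs
    have hrs : r * s = h := div_mul_cancel₀ _ hs.ne'
    have hsθ := Real.sin_sq_add_cos_sq θ
    have hsφ := Real.sin_sq_add_cos_sq φ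
    have hQpos' : (0:ℝ) < Q (s, θ, φ) := by
      refine lt_of_lt_of_le (by norm_num) (hQpos (s, θ, φ) ?_)
      rw [abs_of_pos hs]; exact hsε.le
    set ρ : ℝ := Real.sqrt (Q (s, θ, φ)) with hρdef
    have hρpos : 0 < ρ := Real.sqrt_pos.mpr hQpos'
    have hρsq : ρ ^ 2 = Q (s, θ, φ) := Real.sq_sqrt hQpos'.le
    have hQval : r ^ 2 * Q (s, θ, φ) = r ^ 2 - 2 * r * P (s, θ, φ) + n ^ 2 := by
      simp only [hQdef]
      rw [← hrs]
      field_simp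
    have hnorm1 : ‖sph r θ φ‖ = r := by
      rw [sph, EuclideanSpace.norm_eq]
      simp only [Fin.sum_univ_three, Real.norm_eq_abs, sq_abs, Matrix.cons_val_zero,
        Matrix.cons_val_one, Matrix.head_cons, Matrix.head_fin_const, Matrix.cons_val_two,
        Matrix.tail_cons]
      rw [show (r * Real.sin θ * Real.cos φ) ^ 2 + (r * Real.sin θ * Real.sin φ) ^ 2
          + (r * Real.cos θ) ^ 2 = r ^ 2 by
        linear_combination r ^ 2 * Real.sin θ ^ 2 * hsφ + r ^ 2 * hsθ]
      exact Real.sqrt_sq hrpos.le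
    have hnorm2 : ‖sph r θ φ - x'‖ = r * ρ := by
      have e1 : ‖sph r θ φ - x'‖ = Real.sqrt ((r * Real.sin θ * Real.cos φ - x' 0) ^ 2
          + (r * Real.sin θ * Real.sin φ - x' 1) ^ 2 + (r * Real.cos θ - x' 2) ^ 2) := by
        rw [EuclideanSpace.norm_eq]
        congr 1
        simp [sph, Fin.sum_univ_three, Real.norm_eq_abs, sq_abs]
      have e2 : (r * Real.sin θ * Real.cos φ - x' 0) ^ 2
          + (r * Real.sin θ * Real.sin φ - x' 1) ^ 2 + (r * Real.cos θ - x' 2) ^ 2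
          = r ^ 2 * Q (s, θ, φ) := by
        rw [hQval]
        simp only [hPdef]
        linear_combination r ^ 2 * Real.sin θ ^ 2 * hsφ + r ^ 2 * hsθ - hnormsq
      rw [e1, e2, hρdef, Real.sqrt_mul (sq_nonneg r), Real.sqrt_sq hrpos.le]
    have hρ1 : ρ + 1 ≠ 0 := by positivity
    have hr2 : (r * ρ) ^ 2 = r ^ 2 - 2 * r * P (s, θ, φ) + n ^ 2 := by
      rw [mul_pow, hρsq, hQval]
    have key : r * ρ - r = (s * n ^ 2 / h - 2 * P (s, θ, φ)) / (ρ + 1) := by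
      rw [eq_div_iff hρ1, ← hrs]
      have hs0 : s ≠ 0 := hs.ne'
      field_simp
      linear_combination hr2
    show (↑ρ : ℂ)⁻¹ * Complex.exp (Complex.I * ↑κ *
        Complex.ofReal ((s * n ^ 2 / h - 2 * P (s, θ, φ)) / (ρ + 1))) = gS κ (sph r θ φ) x'
    rw [gS, hnorm1, hnorm2, ← key,
      show r / (r * ρ) = ρ⁻¹ by field_simp]
    push_cast
    ring
end
end

section
/- Let 0 < η < 1 and n ≥ 0. Then there exists a real constant M(η, n), depending only on η and n, with the following property: for every H > 0, setting h = √3·H/2, for every x' ∈ ℝ³ with |x'| ≤ h, and for every (s₀, θ₀, φ₀) with s₀ > 0 such that x₀ = x(s₀, θ₀, φ₀) satisfies |x'| ≤ η·|x₀|, the Laplace analytic factor g^Δ(s, θ, φ) := |x(s, θ, φ)| / |x(s, θ, φ) − x'| satisfies |∂^n g^Δ/∂ξ^n (s₀, θ₀, φ₀)| ≤ M(η, n) for each of ξ = s, ξ = θ, and ξ = φ; in particular the bound is independent of the box size H. -/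
set_option autoImplicit false

set_option maxHeartbeats 2000000

noncomputable section

open Real Set Filter Topology

section Aux

lemma rpow_iterDeriv (p : ℝ) : ∀ (i : ℕ) (y : ℝ), 0 < y →
    iteratedDeriv i (fun x : ℝ => x ^ p) y
      = (∏ j ∈ Finset.range i, (p - j)) * y ^ (p - i) := by
  intro i
  induction i with
  | zero => intro y hy; simp
  | succ i ih =>
    intro y hy
    rw [iteratedDeriv_succ]
    have hev : iteratedDeriv i (fun x : ℝ => x ^ p)
        =ᶠ[𝓝 y] fun x => (∏ j ∈ Finset.range i, (p - j)) * x ^ (p - i) := by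
      filter_upwards [Ioi_mem_nhds hy] with x hx
      exact ih x hx
    have hdiff : DifferentiableAt ℝ (fun x : ℝ => x ^ (p - i)) y :=
      Real.differentiableAt_rpow_const_of_ne _ hy.ne'
    rw [hev.deriv_eq, deriv_const_mul _ hdiff,
      Real.deriv_rpow_const y, Finset.prod_range_succ]
    rw [show p - ↑i - 1 = p - ↑(i + 1) by push_cast; ring]
    ring

lemma prod_range_fact (i : ℕ) :
    ∏ j ∈ Finset.range i, ((j : ℝ) + 1) = Nat.factorial i := by
  induction i with
  | zero => simp
  | succ i ih => rw [Finset.prod_range_succ, ih, Nat.factorial_succ]; push_cast; ring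

/-- The key bound: `n`-th derivative of `q ^ (-1/2)` for `q` bounded below with
derivative bounds. -/
lemma key (δ : ℝ) (hδ0 : 0 < δ) (hδ1 : δ ≤ 1) (n : ℕ) :
    ∃ M : ℝ, ∀ (q : ℝ → ℝ) (U : Set ℝ) (t₀ : ℝ), IsOpen U → t₀ ∈ U →
    ContDiff ℝ n q →
    (∀ t ∈ U, δ ≤ q t) →
    (∀ i, 1 ≤ i → i ≤ n → |iteratedDeriv i q t₀| ≤ 36 ^ i) →
    |iteratedDeriv n (fun t => (q t) ^ (-(1/2) : ℝ)) t₀| ≤ M := by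
  set C : ℝ := Nat.factorial n * δ ^ (-(1/2 : ℝ) - n) with hC_def
  refine ⟨Nat.factorial n * C * 36 ^ n, ?_⟩
  intro q U t₀ hU ht₀ hq hlow hD
  set g : ℝ → ℝ := fun y => y ^ (-(1/2) : ℝ) with hg_def
  have hcomp : (fun t => (q t) ^ (-(1/2) : ℝ)) = g ∘ q := rfl
  have hqt₀ : q t₀ ∈ Ioi (0:ℝ) := lt_of_lt_of_le hδ0 (hlow t₀ ht₀)
  rw [hcomp, ← Real.norm_eq_abs, ← norm_iteratedFDeriv_eq_norm_iteratedDeriv,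
    ← iteratedFDerivWithin_of_isOpen (𝕜 := ℝ) (f := g ∘ q) n hU ht₀]
  have hgc : ContDiffOn ℝ n g (Ioi (0:ℝ)) := fun y hy =>
    (Real.contDiffAt_rpow_const_of_ne (ne_of_gt hy)).contDiffWithinAt
  refine norm_iteratedFDerivWithin_comp_le hgc hq.contDiffOn le_rfl
    (isOpen_Ioi.uniqueDiffOn) hU.uniqueDiffOn
    (fun t ht => lt_of_lt_of_le hδ0 (hlow t ht)) ht₀ ?_ ?_
  · intro i hi
    rw [iteratedFDerivWithin_of_isOpen (𝕜 := ℝ) i isOpen_Ioi hqt₀,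
      norm_iteratedFDeriv_eq_norm_iteratedDeriv, Real.norm_eq_abs,
      rpow_iterDeriv _ i _ (lt_of_lt_of_le hδ0 (hlow t₀ ht₀)), abs_mul]
    have h1 : |∏ j ∈ Finset.range i, (-(1/2 : ℝ) - j)| ≤ Nat.factorial n := by
      rw [Finset.abs_prod]
      calc ∏ j ∈ Finset.range i, |(-(1/2 : ℝ) - j)|
          ≤ ∏ j ∈ Finset.range i, ((j : ℝ) + 1) := by
            apply Finset.prod_le_prod (fun j _ => abs_nonneg _)
            intro j _
            have hj : (0:ℝ) ≤ j := Nat.cast_nonneg j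
            rw [abs_of_nonpos (by linarith)]
            linarith
        _ = Nat.factorial i := prod_range_fact i
        _ ≤ Nat.factorial n := by exact_mod_cast Nat.cast_le.mpr (Nat.factorial_le hi)
    have h2 : |(q t₀) ^ (-(1/2 : ℝ) - i)| ≤ δ ^ (-(1/2 : ℝ) - n) := by
      rw [abs_of_nonneg (Real.rpow_nonneg (le_of_lt hqt₀) _)]
      calc (q t₀) ^ (-(1/2 : ℝ) - i) ≤ δ ^ (-(1/2 : ℝ) - i) :=
            Real.rpow_le_rpow_of_nonpos hδ0 (hlow t₀ ht₀)
              (by have : (0:ℝ) ≤ i := Nat.cast_nonneg i; linarith)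
        _ ≤ δ ^ (-(1/2 : ℝ) - n) := Real.rpow_le_rpow_of_exponent_ge hδ0 hδ1
            (by have : (i:ℝ) ≤ (n:ℝ) := Nat.cast_le.mpr hi; linarith)
    calc |∏ j ∈ Finset.range i, (-(1/2 : ℝ) - j)| * |(q t₀) ^ (-(1/2 : ℝ) - i)|
        ≤ (Nat.factorial n : ℝ) * δ ^ (-(1/2 : ℝ) - n) :=
          mul_le_mul h1 h2 (abs_nonneg _) (by positivity)
      _ = C := rfl
  · intro i h1i hin
    rw [iteratedFDerivWithin_of_isOpen (𝕜 := ℝ) i hU ht₀,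
      norm_iteratedFDeriv_eq_norm_iteratedDeriv, Real.norm_eq_abs]
    exact hD i h1i hin

lemma trig_deriv (a b c : ℝ) :
    deriv (fun t : ℝ => a * Real.sin t + b * Real.cos t + c)
      = fun t : ℝ => (-b) * Real.sin t + a * Real.cos t + 0 := by
  funext t
  have h : HasDerivAt (fun t : ℝ => a * Real.sin t + b * Real.cos t + c)
      ((-b) * Real.sin t + a * Real.cos t + 0) t := by
    have := (((Real.hasDerivAt_sin t).const_mul a).add
      ((Real.hasDerivAt_cos t).const_mul b)).add_const c
    exact this.congr_deriv (by ring)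
  exact h.deriv

lemma trig_bound : ∀ (i : ℕ) (a b c t : ℝ),
    |iteratedDeriv (i + 1) (fun t : ℝ => a * Real.sin t + b * Real.cos t + c) t|
      ≤ |a| + |b| := by
  intro i
  induction i with
  | zero =>
    intro a b c t
    rw [iteratedDeriv_one, trig_deriv]
    calc |(-b) * Real.sin t + a * Real.cos t + 0|
        ≤ |(-b) * Real.sin t| + |a * Real.cos t| := by rw [add_zero]; exact abs_add_le _ _
      _ ≤ |b| * 1 + |a| * 1 := by
          rw [abs_mul, abs_mul, abs_neg]
          gcongr
          · exact Real.abs_sin_le_one t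
          · exact Real.abs_cos_le_one t
      _ ≤ |a| + |b| := by nlinarith []
  | succ i ih =>
    intro a b c t
    rw [iteratedDeriv_succ', trig_deriv]
    calc |iteratedDeriv (i+1) (fun t : ℝ => (-b) * Real.sin t + a * Real.cos t + 0) t|
        ≤ |(-b)| + |a| := ih _ _ _ _
      _ = |a| + |b| := by rw [abs_neg]; ring

lemma iterDeriv_const_succ : ∀ (i : ℕ) (c t : ℝ),
    iteratedDeriv (i + 1) (fun _ : ℝ => c) t = 0 := by
  intro i
  induction i with
  | zero => intro c t; rw [iteratedDeriv_one]; simp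
  | succ i ih =>
    intro c t
    rw [iteratedDeriv_succ', deriv_const']
    exact ih 0 t

lemma quad_deriv (α β γ : ℝ) :
    deriv (fun t : ℝ => α * t ^ 2 + β * t + γ) = fun t : ℝ => 2 * α * t + β := by
  funext t
  have h : HasDerivAt (fun t : ℝ => α * t ^ 2 + β * t + γ) (2 * α * t + β) t := by
    have := (((hasDerivAt_pow 2 t).const_mul α).add ((hasDerivAt_id t).const_mul β)).add_const γ
    exact this.congr_deriv (by ring)
  exact h.deriv

lemma lin_deriv (α β : ℝ) :
    deriv (fun t : ℝ => 2 * α * t + β) = fun _ : ℝ => 2 * α := by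
  funext t
  have h : HasDerivAt (fun t : ℝ => 2 * α * t + β) (2 * α) t := by
    have := ((hasDerivAt_id t).const_mul (2 * α)).add_const β
    exact this.congr_deriv (by ring)
  exact h.deriv

lemma quad_bound (α β γ t : ℝ) (i : ℕ) (h1 : 1 ≤ i)
    (hd1 : |2 * α * t + β| ≤ 36) (hd2 : |2 * α| ≤ 36) :
    |iteratedDeriv i (fun t : ℝ => α * t ^ 2 + β * t + γ) t| ≤ 36 ^ i := by
  match i, h1 with
  | 1, _ =>
    rw [iteratedDeriv_one, quad_deriv]
    simpa using hd1
  | 2, _ =>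
    rw [iteratedDeriv_succ', quad_deriv, iteratedDeriv_one, lin_deriv]
    calc |2 * α| ≤ 36 := hd2
      _ ≤ 36 ^ 2 := by norm_num
  | (j + 3), _ =>
    rw [iteratedDeriv_succ', quad_deriv, iteratedDeriv_succ', lin_deriv,
      iterDeriv_const_succ]
    simp only [abs_zero]
    positivity

lemma sph_apply0 (r θ φ : ℝ) : sph r θ φ 0 = r * Real.sin θ * Real.cos φ := by simp [sph]
lemma sph_apply1 (r θ φ : ℝ) : sph r θ φ 1 = r * Real.sin θ * Real.sin φ := by simp [sph]
lemma sph_apply2 (r θ φ : ℝ) : sph r θ φ 2 = r * Real.cos θ := by simp [sph]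

lemma norm3 (x : EuclideanSpace ℝ (Fin 3)) :
    ‖x‖ = Real.sqrt ((x 0)^2 + (x 1)^2 + (x 2)^2) := by
  rw [EuclideanSpace.norm_eq, Fin.sum_univ_three]
  simp [Real.norm_eq_abs, sq_abs, add_assoc]

lemma sph_norm (r θ φ : ℝ) : ‖sph r θ φ‖ = |r| := by
  rw [norm3, sph_apply0, sph_apply1, sph_apply2]
  rw [show (r * Real.sin θ * Real.cos φ)^2 + (r * Real.sin θ * Real.sin φ)^2
      + (r * Real.cos θ)^2 = r^2 by
    have h1 := Real.sin_sq_add_cos_sq θ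
    have h2 := Real.sin_sq_add_cos_sq φ
    linear_combination (r^2 * Real.sin θ^2) * h2 + r^2 * h1]
  exact Real.sqrt_sq_eq_abs r

lemma sph_smul (r θ φ : ℝ) : sph r θ φ = r • sph 1 θ φ := by
  ext i
  fin_cases i <;> simp [sph] <;> ring

lemma comp_le_norm (x : EuclideanSpace ℝ (Fin 3)) (i : Fin 3) : |x i| ≤ ‖x‖ := by
  rw [norm3, ← Real.sqrt_sq_eq_abs]
  apply Real.sqrt_le_sqrt
  have h0 := sq_nonneg (x 0); have h1 := sq_nonneg (x 1); have h2 := sq_nonneg (x 2)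
  fin_cases i <;> simp only [Fin.zero_eta, Fin.mk_one, Fin.isValue] <;>
    first
    | (show x 0 ^ 2 ≤ _ ; linarith)
    | (show x 1 ^ 2 ≤ _ ; linarith)
    | (show x 2 ^ 2 ≤ _ ; linarith)

lemma norm_sub3 (x w : EuclideanSpace ℝ (Fin 3)) :
    ‖x - w‖ = Real.sqrt ((x 0 - w 0)^2 + (x 1 - w 1)^2 + (x 2 - w 2)^2) := by
  rw [norm3]
  congr 1

/-- The generic θ/φ case: the function `t ↦ ‖r • v t‖ / ‖r • v t − r • w‖` with `v`
a unit-sphere curve whose squared distance to `w` is a trig polynomial. -/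
lemma trig_case (δ M : ℝ) (n : ℕ)
    (hM : ∀ (q : ℝ → ℝ) (U : Set ℝ) (t₀ : ℝ), IsOpen U → t₀ ∈ U →
      ContDiff ℝ n q → (∀ t ∈ U, δ ≤ q t) →
      (∀ i, 1 ≤ i → i ≤ n → |iteratedDeriv i q t₀| ≤ 36 ^ i) →
      |iteratedDeriv n (fun t => (q t) ^ (-(1/2) : ℝ)) t₀| ≤ M)
    (hδ : 0 < δ) (η : ℝ) (hη1 : η < 1) (hδle : δ ≤ (1 - η)^2)
    (a b cc : ℝ) (hab : |a| + |b| ≤ 6)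
    (v : ℝ → EuclideanSpace ℝ (Fin 3)) (hv : ∀ t, ‖v t‖ = 1)
    (w : EuclideanSpace ℝ (Fin 3)) (hw : ‖w‖ ≤ η)
    (hqeq : ∀ t, (v t 0 - w 0)^2 + (v t 1 - w 1)^2 + (v t 2 - w 2)^2
      = a * Real.sin t + b * Real.cos t + cc)
    (r : ℝ) (hr : 0 < r) (t₀ : ℝ) :
    |iteratedDeriv n (fun t => ‖r • v t‖ / ‖r • v t - r • w‖) t₀| ≤ M := by
  have hη0 : (0:ℝ) ≤ 1 - η := by
    by_contra hcon
    push_neg at hcon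
    have : ‖w‖ < ‖w‖ := lt_of_le_of_lt hw (by nlinarith [norm_nonneg w, sq_nonneg (1-η)])
    exact lt_irrefl _ this
  set q : ℝ → ℝ := fun t => a * Real.sin t + b * Real.cos t + cc with hq_def
  have hq0 : ∀ t, 0 ≤ q t := by
    intro t
    have := hqeq t
    simp only [hq_def]
    rw [← this]
    positivity
  have hnorm : ∀ t, ‖v t - w‖ = Real.sqrt (q t) := by
    intro t
    rw [norm_sub3, hqeq t]
  have hlow : ∀ t, δ ≤ q t := by
    intro t
    have h1 : 1 - η ≤ Real.sqrt (q t) := by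
      rw [← hnorm]
      calc 1 - η ≤ ‖v t‖ - ‖w‖ := by rw [hv]; linarith
        _ ≤ ‖v t - w‖ := norm_sub_norm_le _ _
    have h2 : (1 - η)^2 ≤ (Real.sqrt (q t))^2 := pow_le_pow_left₀ hη0 h1 2
    rw [Real.sq_sqrt (hq0 t)] at h2
    linarith
  have hfeq : (fun t => ‖r • v t‖ / ‖r • v t - r • w‖)
      = fun t => (q t) ^ (-(1/2) : ℝ) := by
    funext t
    have hsq : 0 < Real.sqrt (q t) := by
      have := hlow t
      apply Real.sqrt_pos.mpr
      linarith
    rw [← smul_sub, norm_smul, norm_smul, hv, Real.norm_eq_abs, abs_of_pos hr, hnorm,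
      Real.rpow_neg (hq0 t), ← Real.sqrt_eq_rpow]
    field_simp
  rw [hfeq]
  refine hM q univ t₀ isOpen_univ (mem_univ _)
    (((contDiff_const.mul Real.contDiff_sin).add
      (contDiff_const.mul Real.contDiff_cos)).add contDiff_const)
    (fun t _ => hlow t) ?_
  intro i h1i hin
  match i, h1i with
  | (j + 1), _ =>
    calc |iteratedDeriv (j+1) q t₀| ≤ |a| + |b| := trig_bound j a b cc t₀
      _ ≤ 6 := hab
      _ ≤ 36 ^ (j+1) := by
          calc (6:ℝ) ≤ 36 := by norm_num
            _ ≤ 36 ^ (j+1) := le_self_pow₀ (by norm_num) (Nat.succ_ne_zero j)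

end Aux

/-- Laplace case: with `h = √3·H/2` and `x(s, θ, φ) = x̃(h/s, θ, φ)`,
the Laplace analytic factor `g^Δ(s,θ,φ) = ‖x(s,θ,φ)‖ / ‖x(s,θ,φ) − x'‖` has all its
`n`-th partial derivatives in each of `s`, `θ`, `φ` bounded by a constant `M(η,n)`
depending only on `η` and `n` — in particular independent of the box size `H`. -/
theorem laplace_factor_derivative_bound (η : ℝ) (hη0 : 0 < η) (hη1 : η < 1) (n : ℕ) :
    ∃ M : ℝ, ∀ H : ℝ, 0 < H →
      ∀ x' : EuclideanSpace ℝ (Fin 3), ‖x'‖ ≤ Real.sqrt 3 * H / 2 →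
      ∀ s₀ θ₀ φ₀ : ℝ, 0 < s₀ →
        ‖x'‖ ≤ η * ‖sph (Real.sqrt 3 * H / 2 / s₀) θ₀ φ₀‖ →
        |iteratedDeriv n
            (fun s => ‖sph (Real.sqrt 3 * H / 2 / s) θ₀ φ₀‖ /
              ‖sph (Real.sqrt 3 * H / 2 / s) θ₀ φ₀ - x'‖) s₀| ≤ M ∧
        |iteratedDeriv n
            (fun θ => ‖sph (Real.sqrt 3 * H / 2 / s₀) θ φ₀‖ /
              ‖sph (Real.sqrt 3 * H / 2 / s₀) θ φ₀ - x'‖) θ₀| ≤ M ∧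
        |iteratedDeriv n
            (fun φ => ‖sph (Real.sqrt 3 * H / 2 / s₀) θ₀ φ‖ /
              ‖sph (Real.sqrt 3 * H / 2 / s₀) θ₀ φ - x'‖) φ₀| ≤ M := by
  have hρ0 : (0:ℝ) < (1 - η)/2 := by linarith
  obtain ⟨M, hM⟩ := key (((1 - η)/2)^2) (by positivity) (by nlinarith) n
  refine ⟨M, ?_⟩
  intro H hH x' hx' s₀ θ₀ φ₀ hs₀ hxη
  set h : ℝ := Real.sqrt 3 * H / 2 with hh_def
  have hh : 0 < h := by
    have h3 : 0 < Real.sqrt 3 := Real.sqrt_pos.mpr (by norm_num)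
    rw [hh_def]; positivity
  set r : ℝ := h / s₀ with hr_def
  have hr : 0 < r := div_pos hh hs₀
  have hsphnorm : ‖sph r θ₀ φ₀‖ = r := by rw [sph_norm]; exact abs_of_pos hr
  have hx'r : ‖x'‖ ≤ η * r := by rw [← hsphnorm]; exact hxη
  -- the rescaled source point for the angular cases
  set w : EuclideanSpace ℝ (Fin 3) := r⁻¹ • x' with hw_def
  have hwnorm : ‖w‖ ≤ η := by
    rw [hw_def, norm_smul, Real.norm_eq_abs, abs_of_pos (inv_pos.mpr hr)]
    calc r⁻¹ * ‖x'‖ ≤ r⁻¹ * (η * r) := by gcongr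
      _ = η := by field_simp
  have hx'w : x' = r • w := (smul_inv_smul₀ hr.ne' x').symm
  have hw0 : |w 0| ≤ 1 := le_trans (comp_le_norm w 0) (le_trans hwnorm (le_of_lt hη1))
  have hw1 : |w 1| ≤ 1 := le_trans (comp_le_norm w 1) (le_trans hwnorm (le_of_lt hη1))
  have hw2 : |w 2| ≤ 1 := le_trans (comp_le_norm w 2) (le_trans hwnorm (le_of_lt hη1))
  have habs_sc : ∀ α β : ℝ, |Real.sin α * Real.cos β| ≤ 1 := fun α β => by
    rw [abs_mul]
    exact mul_le_one₀ (Real.abs_sin_le_one α) (abs_nonneg _) (Real.abs_cos_le_one β)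
  have habs_ss : ∀ α β : ℝ, |Real.sin α * Real.sin β| ≤ 1 := fun α β => by
    rw [abs_mul]
    exact mul_le_one₀ (Real.abs_sin_le_one α) (abs_nonneg _) (Real.abs_sin_le_one β)
  have hδle : ((1 - η)/2)^2 ≤ (1 - η)^2 := by nlinarith
  refine ⟨?_, ?_, ?_⟩
  · -- ========== the s-derivative ==========
    set cv : EuclideanSpace ℝ (Fin 3) := h⁻¹ • x' with hcv_def
    have hx'cv : x' = h • cv := (smul_inv_smul₀ hh.ne' x').symm
    have hcvnorm : ‖cv‖ ≤ 1 := by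
      rw [hcv_def, norm_smul, Real.norm_eq_abs, abs_of_pos (inv_pos.mpr hh)]
      calc h⁻¹ * ‖x'‖ ≤ h⁻¹ * h := by gcongr
        _ = 1 := inv_mul_cancel₀ hh.ne'
    have hcvs₀ : s₀ * ‖cv‖ ≤ η := by
      have : ‖cv‖ ≤ η * (h / s₀) * h⁻¹ := by
        rw [hcv_def, norm_smul, Real.norm_eq_abs, abs_of_pos (inv_pos.mpr hh), mul_comm]
        gcongr
      calc s₀ * ‖cv‖ ≤ s₀ * (η * (h / s₀) * h⁻¹) := by gcongr
        _ = η := by field_simp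
    set α : ℝ := (cv 0)^2 + (cv 1)^2 + (cv 2)^2 with hα_def
    have hαnorm : α = ‖cv‖^2 := by
      rw [norm3, Real.sq_sqrt (by positivity)]
    set β : ℝ := -(2*((Real.sin θ₀ * Real.cos φ₀) * cv 0
      + (Real.sin θ₀ * Real.sin φ₀) * cv 1 + Real.cos θ₀ * cv 2)) with hβ_def
    set q : ℝ → ℝ := fun s => α * s^2 + β * s + 1 with hq_def
    have hqeq : ∀ s : ℝ,
        (1 * Real.sin θ₀ * Real.cos φ₀ - s * cv 0)^2
        + (1 * Real.sin θ₀ * Real.sin φ₀ - s * cv 1)^2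
        + (1 * Real.cos θ₀ - s * cv 2)^2 = q s := by
      intro s
      simp only [hq_def, hβ_def, hα_def]
      linear_combination (Real.sin θ₀^2) * Real.sin_sq_add_cos_sq φ₀
        + Real.sin_sq_add_cos_sq θ₀
    have hq0 : ∀ s : ℝ, 0 ≤ q s := by
      intro s
      rw [← hqeq s]
      positivity
    have hnormq : ∀ s : ℝ, ‖sph 1 θ₀ φ₀ - s • cv‖ = Real.sqrt (q s) := by
      intro s
      rw [norm_sub3, ← hqeq s]
      simp only [sph_apply0, sph_apply1, sph_apply2, PiLp.smul_apply, smul_eq_mul]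
    set m : ℝ := min ((1 - η)/2) s₀ with hm_def
    have hm : 0 < m := lt_min hρ0 hs₀
    set U : Set ℝ := Ioo (s₀ - m) (s₀ + m) with hU_def
    have hs₀U : s₀ ∈ U := by constructor <;> [linarith; linarith]
    have hpos : ∀ s ∈ U, 0 < s := by
      intro s hs
      have := min_le_right ((1 - η)/2) s₀
      have := hs.1
      simp only [hU_def, mem_Ioo] at *
      linarith
    have hlow : ∀ s ∈ U, ((1 - η)/2)^2 ≤ q s := by
      intro s hs
      have hs0 : 0 < s := hpos s hs
      have hs2 : s < s₀ + m := hs.2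
      have hmle : m ≤ (1 - η)/2 := min_le_left _ _
      have hscv : s * ‖cv‖ ≤ (1 + η)/2 := by
        nlinarith [norm_nonneg cv, hcvnorm, hcvs₀]
      have h1 : (1 - η)/2 ≤ Real.sqrt (q s) := by
        rw [← hnormq]
        have hsm : ‖s • cv‖ = s * ‖cv‖ := by
          rw [norm_smul, Real.norm_eq_abs, abs_of_pos hs0]
        calc (1 - η)/2 = 1 - (1 + η)/2 := by ring
          _ ≤ ‖sph 1 θ₀ φ₀‖ - ‖s • cv‖ := by
              rw [sph_norm, hsm, abs_one]; linarith
          _ ≤ ‖sph 1 θ₀ φ₀ - s • cv‖ := norm_sub_norm_le _ _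
      have h2 := pow_le_pow_left₀ (le_of_lt hρ0) h1 2
      rwa [Real.sq_sqrt (hq0 s)] at h2
    have hev : (fun s => ‖sph (h / s) θ₀ φ₀‖ / ‖sph (h / s) θ₀ φ₀ - x'‖)
        =ᶠ[𝓝 s₀] (fun s => (q s) ^ (-(1/2) : ℝ)) := by
      filter_upwards [isOpen_Ioo.mem_nhds hs₀U] with s hs
      have hs0 : 0 < s := hpos s hs
      have hhs : 0 < h / s := div_pos hh hs0
      have hx2 : x' = (h / s) • (s • cv) := by
        rw [smul_smul, show h / s * s = h by field_simp, ← hx'cv]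
      have hsq : 0 < Real.sqrt (q s) := by
        have := hlow s hs
        exact Real.sqrt_pos.mpr (lt_of_lt_of_le (pow_pos hρ0 2) this)
      rw [sph_smul (h/s) θ₀ φ₀, hx2, ← smul_sub, norm_smul, norm_smul,
        Real.norm_eq_abs, abs_of_pos hhs, hnormq s, sph_norm, abs_one,
        Real.rpow_neg (hq0 s), ← Real.sqrt_eq_rpow]
      field_simp
    rw [Filter.EventuallyEq.iteratedDeriv_eq n hev]
    refine hM q U s₀ isOpen_Ioo hs₀U
      (((contDiff_const.mul (contDiff_id.pow 2)).add
        (contDiff_const.mul contDiff_id)).add contDiff_const)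
      hlow ?_
    intro i h1i hin
    have hα0 : 0 ≤ α := by rw [hαnorm]; positivity
    have hαs₀ : α * s₀ ≤ 1 := by
      rw [hαnorm]
      nlinarith [norm_nonneg cv, hcvnorm, hcvs₀]
    have hc0 : |cv 0| ≤ 1 := le_trans (comp_le_norm cv 0) hcvnorm
    have hc1 : |cv 1| ≤ 1 := le_trans (comp_le_norm cv 1) hcvnorm
    have hc2 : |cv 2| ≤ 1 := le_trans (comp_le_norm cv 2) hcvnorm
    have hβb : |β| ≤ 6 := by
      rw [hβ_def, abs_neg, abs_mul, abs_two]
      have e0 : |Real.sin θ₀ * Real.cos φ₀ * cv 0| ≤ 1 := by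
        rw [abs_mul]
        exact mul_le_one₀ (habs_sc θ₀ φ₀) (abs_nonneg _) hc0
      have e1 : |Real.sin θ₀ * Real.sin φ₀ * cv 1| ≤ 1 := by
        rw [abs_mul]
        exact mul_le_one₀ (habs_ss θ₀ φ₀) (abs_nonneg _) hc1
      have e2 : |Real.cos θ₀ * cv 2| ≤ 1 := by
        rw [abs_mul]
        exact mul_le_one₀ (Real.abs_cos_le_one θ₀) (abs_nonneg _) hc2
      calc 2 * |Real.sin θ₀ * Real.cos φ₀ * cv 0 + Real.sin θ₀ * Real.sin φ₀ * cv 1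
            + Real.cos θ₀ * cv 2|
          ≤ 2 * (|Real.sin θ₀ * Real.cos φ₀ * cv 0 + Real.sin θ₀ * Real.sin φ₀ * cv 1|
            + |Real.cos θ₀ * cv 2|) := by gcongr; exact abs_add_le _ _
        _ ≤ 2 * ((|Real.sin θ₀ * Real.cos φ₀ * cv 0| + |Real.sin θ₀ * Real.sin φ₀ * cv 1|)
            + |Real.cos θ₀ * cv 2|) := by gcongr; exact abs_add_le _ _
        _ ≤ 6 := by linarith
    apply quad_bound α β 1 s₀ i h1i
    · calc |2 * α * s₀ + β| ≤ |2 * α * s₀| + |β| := abs_add_le _ _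
        _ ≤ 2 + 6 := by
            have : |2 * α * s₀| = 2 * (α * s₀) := by
              rw [abs_of_nonneg (by positivity)]; ring
            rw [this]
            have : α * s₀ ≤ 1 := hαs₀
            linarith
        _ ≤ 36 := by norm_num
    · rw [abs_of_nonneg (by positivity)]
      rw [hαnorm]
      nlinarith [norm_nonneg cv, hcvnorm]
  · -- ========== the θ-derivative ==========
    have hfun : (fun θ => ‖sph r θ φ₀‖ / ‖sph r θ φ₀ - x'‖)
        = (fun θ => ‖r • sph 1 θ φ₀‖ / ‖r • sph 1 θ φ₀ - r • w‖) := by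
      funext θ
      rw [← sph_smul, ← hx'w]
    rw [hfun]
    refine trig_case _ M n hM (by positivity) η hη1 hδle
      (-(2*(w 0 * Real.cos φ₀ + w 1 * Real.sin φ₀))) (-(2 * w 2))
      (1 + ((w 0)^2 + (w 1)^2 + (w 2)^2)) ?_
      (fun θ => sph 1 θ φ₀) (fun θ => by rw [sph_norm, abs_one])
      w hwnorm ?_ r hr θ₀
    · -- |a| + |b| ≤ 6
      have h1 : |w 0 * Real.cos φ₀ + w 1 * Real.sin φ₀| ≤ |w 0| + |w 1| := by
        calc |w 0 * Real.cos φ₀ + w 1 * Real.sin φ₀|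
            ≤ |w 0 * Real.cos φ₀| + |w 1 * Real.sin φ₀| := abs_add_le _ _
          _ = |w 0| * |Real.cos φ₀| + |w 1| * |Real.sin φ₀| := by rw [abs_mul, abs_mul]
          _ ≤ |w 0| * 1 + |w 1| * 1 := by
              gcongr
              · exact Real.abs_cos_le_one φ₀
              · exact Real.abs_sin_le_one φ₀
          _ = |w 0| + |w 1| := by ring
      rw [abs_neg, abs_neg, abs_mul, abs_mul, abs_two]
      calc 2 * |w 0 * Real.cos φ₀ + w 1 * Real.sin φ₀| + 2 * |w 2|
          ≤ 2 * (|w 0| + |w 1|) + 2 * |w 2| := by gcongr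
        _ ≤ 6 := by linarith
    · intro t
      simp only [sph_apply0, sph_apply1, sph_apply2, one_mul]
      linear_combination (Real.sin t^2) * Real.sin_sq_add_cos_sq φ₀
        + Real.sin_sq_add_cos_sq t
  · -- ========== the φ-derivative ==========
    have hfun : (fun φ => ‖sph r θ₀ φ‖ / ‖sph r θ₀ φ - x'‖)
        = (fun φ => ‖r • sph 1 θ₀ φ‖ / ‖r • sph 1 θ₀ φ - r • w‖) := by
      funext φ
      rw [← sph_smul, ← hx'w]
    rw [hfun]
    refine trig_case _ M n hM (by positivity) η hη1 hδle
      (-(2*(w 1 * Real.sin θ₀))) (-(2*(w 0 * Real.sin θ₀)))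
      (1 + ((w 0)^2 + (w 1)^2 + (w 2)^2) - 2 * w 2 * Real.cos θ₀) ?_
      (fun φ => sph 1 θ₀ φ) (fun φ => by rw [sph_norm, abs_one])
      w hwnorm ?_ r hr φ₀
    · -- |a| + |b| ≤ 6
      have h1 : |w 1 * Real.sin θ₀| ≤ 1 := by
        rw [abs_mul]
        exact mul_le_one₀ hw1 (abs_nonneg _) (Real.abs_sin_le_one θ₀)
      have h2 : |w 0 * Real.sin θ₀| ≤ 1 := by
        rw [abs_mul]
        exact mul_le_one₀ hw0 (abs_nonneg _) (Real.abs_sin_le_one θ₀)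
      simp only [abs_neg, abs_mul, abs_two] at h1 h2 ⊢
      linarith
    · intro t
      simp only [sph_apply0, sph_apply1, sph_apply2, one_mul]
      linear_combination (Real.sin θ₀^2) * Real.sin_sq_add_cos_sq t
        + Real.sin_sq_add_cos_sq θ₀
end
end
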